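/- Let R be a unital ring and ψ₁, ψ₂, ψ₃, ψ₄, Δ ∈ R with ψ₄ a unit. Set d := ψ₂*ψ₄⁻¹ and suppose 1 − Δ*d and 1 − d*Δ are units. Define G₂ := −ψ₄⁻¹*(1 − Δ*d)⁻¹*(ψ₃ − Δ*ψ₁), ζ₁ := ψ₁ + ψ₂*G₂, and ζ₂ := ψ₃ + ψ₄*G₂. Then ζ₁ = (1 − d*Δ)⁻¹*(ψ₁ − d*ψ₃) and ζ₂ = Δ*ζ₁. -/
import Mathlib


/-- Graph-symbol identities for the constructed destabilizing system: with
`d = ψ₂ψ₄⁻¹`, `G₂ = −ψ₄⁻¹(1 − Δd)⁻¹(ψ₃ − Δψ₁)`, `ζ₁ = ψ₁ + ψ₂G₂` and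
`ζ₂ = ψ₃ + ψ₄G₂`, one has `ζ₁ = (1 − dΔ)⁻¹(ψ₁ − dψ₃)` and `ζ₂ = Δζ₁`. -/
theorem graph_symbol_identities
    {R : Type*} [Ring R] (ψ₁ ψ₂ ψ₃ ψ₄ Δ : R) (hψ₄ : IsUnit ψ₄)
    (h₁ : IsUnit (1 - Δ * (ψ₂ * Ring.inverse ψ₄)))
    (h₂ : IsUnit (1 - (ψ₂ * Ring.inverse ψ₄) * Δ)) :
    ψ₁ + ψ₂ * (-(Ring.inverse ψ₄ * Ring.inverse (1 - Δ * (ψ₂ * Ring.inverse ψ₄)) *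
        (ψ₃ - Δ * ψ₁))) =
      Ring.inverse (1 - (ψ₂ * Ring.inverse ψ₄) * Δ) *
        (ψ₁ - (ψ₂ * Ring.inverse ψ₄) * ψ₃) ∧
    ψ₃ + ψ₄ * (-(Ring.inverse ψ₄ * Ring.inverse (1 - Δ * (ψ₂ * Ring.inverse ψ₄)) *
        (ψ₃ - Δ * ψ₁))) =
      Δ * (ψ₁ + ψ₂ * (-(Ring.inverse ψ₄ *
        Ring.inverse (1 - Δ * (ψ₂ * Ring.inverse ψ₄)) * (ψ₃ - Δ * ψ₁)))) := by
  set v := Ring.inverse ψ₄ with hv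
  set d := ψ₂ * v with hd
  set J := Ring.inverse (1 - Δ * d) with hJ
  set K := Ring.inverse (1 - d * Δ) with hK
  have hψ : ψ₄ * v = 1 := Ring.mul_inverse_cancel _ hψ₄
  have e1 : (1 - Δ * d) * J = 1 := Ring.mul_inverse_cancel _ h₁
  have e1' : J * (1 - Δ * d) = 1 := Ring.inverse_mul_cancel _ h₁
  have e2 : (1 - d * Δ) * K = 1 := Ring.mul_inverse_cancel _ h₂
  have e2' : K * (1 - d * Δ) = 1 := Ring.inverse_mul_cancel _ h₂
  -- rewrite ψ₂ * (-(v * J * x)) as -(d * (J * x))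
  have habs : ∀ x : R, ψ₂ * -(v * J * x) = -(d * (J * x)) := fun x => by
    rw [mul_assoc v, mul_neg, ← mul_assoc, ← hd]
  have habs4 : ∀ x : R, ψ₄ * -(v * J * x) = -(J * x) := fun x => by
    rw [mul_assoc v, mul_neg, ← mul_assoc, hψ, one_mul]
  have hswap : d * J = K * d := by
    apply h₂.mul_left_cancel
    calc (1 - d * Δ) * (d * J) = (d * (1 - Δ * d)) * J := by noncomm_ring
      _ = d := by rw [mul_assoc, e1, mul_one]
      _ = ((1 - d * Δ) * K) * d := by rw [e2, one_mul]
      _ = (1 - d * Δ) * (K * d) := by rw [mul_assoc]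
  constructor
  · rw [habs, ← mul_assoc, hswap]
    have hψ₁ : ψ₁ = K * ((1 - d * Δ) * ψ₁) := by rw [← mul_assoc, e2', one_mul]
    nth_rewrite 1 [hψ₁]
    noncomm_ring
  · rw [habs, habs4]
    set y := J * (ψ₃ - Δ * ψ₁) with hy
    have h1y : (1 - Δ * d) * y = ψ₃ - Δ * ψ₁ := by rw [hy, ← mul_assoc, e1, one_mul]
    have hy2 : y = ψ₃ - Δ * ψ₁ + Δ * (d * y) := by rw [← h1y]; noncomm_ring
    nth_rewrite 1 [hy2]
    noncomm_ring
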